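/- In the distribution p constructed by replacing the mechanisms of M with their Q-marginals (as in marginal replacement), the conditional distribution of the remaining variables given M equals the truncated (interventional) distribution: p(v_{∖M} | v_M) = ∏_{i∉M} qᵢ(vᵢ | v_{pa(i)}) whenever p(v_M) > 0, i.e., conditioning on M in p coincides with intervening on M in q. -/

import Mathlib

open Finset

lemma sum_update_eq
    {ι : Type*} [Fintype ι] [DecidableEq ι]
    {X : ι → Type*} [∀ i, Fintype (X i)] [∀ i, DecidableEq (X i)]
    (i : ι) (c : X i) (f : (∀ j, X j) → ℝ) :
    ∑ y : ∀ j, X j, f y =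
      ∑ y : ∀ j, X j, if y i = c then ∑ xi : X i, f (Function.update y i xi) else 0 := by
  have h1 : ∀ y : ∀ j, X j,
      (if y i = c then ∑ xi : X i, f (Function.update y i xi) else 0) =
      ∑ xi : X i, if y i = c then f (Function.update y i xi) else 0 := by
    intro y; split <;> simp
  rw [Finset.sum_congr rfl fun y _ => h1 y, Finset.sum_comm]
  have h2 : ∀ xi : X i,
      (∑ y : ∀ j, X j, if y i = c then f (Function.update y i xi) else 0) =
      ∑ y : ∀ j, X j, if y i = xi then f y else 0 := by
    intro xi
    let e : (∀ j, X j) ≃ (∀ j, X j) :=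
      { toFun := fun y => Function.update y i (Equiv.swap c xi (y i))
        invFun := fun y => Function.update y i (Equiv.swap c xi (y i))
        left_inv := by
          intro y; funext j
          by_cases hj : j = i
          · subst hj; simp
          · simp [Function.update_of_ne hj]
        right_inv := by
          intro y; funext j
          by_cases hj : j = i
          · subst hj; simp
          · simp [Function.update_of_ne hj] }
    rw [← Equiv.sum_comp e (fun y => if y i = c then f (Function.update y i xi) else 0)]
    apply Finset.sum_congr rfl
    intro y _
    have hei : (e y) i = Equiv.swap c xi (y i) := by
      show Function.update y i (Equiv.swap c xi (y i)) i = _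
      simp
    have hupd : Function.update (e y) i xi = Function.update y i xi := by
      show Function.update (Function.update y i _) i xi = _
      simp
    rw [hei, hupd]
    have hcond : Equiv.swap c xi (y i) = c ↔ y i = xi := by
      constructor
      · intro h
        have := (Equiv.swap c xi).injective (a₁ := y i) (a₂ := xi)
        apply this
        rw [h, Equiv.swap_apply_right]
      · intro h; rw [h, Equiv.swap_apply_right]
    by_cases h : y i = xi
    · rw [if_pos (hcond.mpr h), if_pos h]
      congr 1
      rw [← h, Function.update_eq_self]
    · rw [if_neg (fun hc => h (hcond.mp hc)), if_neg h]
  rw [Finset.sum_congr rfl fun xi _ => h2 xi, Finset.sum_comm]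
  apply Finset.sum_congr rfl
  intro y _
  simp

lemma sum_truncated_eq_one
    {ι : Type*} [Fintype ι] [DecidableEq ι]
    {X : ι → Type*} [∀ i, Fintype (X i)] [∀ i, DecidableEq (X i)]
    (pa : ι → Finset ι) (hpa : ∀ i, i ∉ pa i)
    (ord : ι → ℕ) (hord : ∀ i, ∀ j ∈ pa i, ord j < ord i)
    (q : ∀ _ : ι, (∀ j, X j) → ℝ)
    (hq_local : ∀ i, ∀ x y : ∀ j, X j,
      (∀ j ∈ insert i (pa i), x j = y j) → q i x = q i y)
    (hq_norm : ∀ i, ∀ x : ∀ j, X j, ∑ xi : X i, q i (Function.update x i xi) = 1) :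
    ∀ (S : Finset ι) (v : ∀ j, X j),
      ∑ y : ∀ j, X j, (if ∀ j ∉ S, y j = v j then ∏ i ∈ S, q i y else 0) = 1 := by
  intro S
  induction S using Finset.strongInductionOn with
  | _ S IH =>
    intro v
    rcases S.eq_empty_or_nonempty with rfl | hS
    · have h : ∀ y : ∀ j, X j, ((∀ j ∉ (∅:Finset ι), y j = v j) ↔ y = v) := by
        intro y
        constructor
        · intro h; funext j; exact h j (Finset.notMem_empty j)
        · rintro rfl j _; rfl
      rw [Finset.sum_congr rfl fun y _ => by rw [Finset.prod_empty, if_congr (h y) rfl rfl]]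
      simp
    · obtain ⟨i, hiS, hmax⟩ := S.exists_max_image ord hS
      have hnotpa : ∀ j ∈ S, i ∉ pa j := by
        intro j hj hipa
        exact absurd (hord j i hipa) (not_lt.mpr (hmax j hj))
      rw [sum_update_eq i (v i)]
      have hmain : ∀ y : ∀ j, X j,
          (if y i = v i then
            ∑ xi : X i, (if ∀ j ∉ S, Function.update y i xi j = v j
              then ∏ k ∈ S, q k (Function.update y i xi) else 0) else 0) =
          (if ∀ j ∉ S.erase i, y j = v j then ∏ k ∈ S.erase i, q k y else 0) := by
        intro y
        by_cases hyi : y i = v i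
        · rw [if_pos hyi]
          have hcond : ∀ xi : X i, (∀ j ∉ S, Function.update y i xi j = v j) ↔ (∀ j ∉ S, y j = v j) := by
            intro xi
            constructor <;> intro h j hj
            · have := h j hj
              rwa [Function.update_of_ne (fun he => hj (by rw [he]; exact hiS))] at this
            · rw [Function.update_of_ne (fun he => hj (by rw [he]; exact hiS))]; exact h j hj
          have hprod : ∀ xi : X i,
              ∏ k ∈ S, q k (Function.update y i xi) =
              q i (Function.update y i xi) * ∏ k ∈ S.erase i, q k y := by
            intro xi
            rw [← Finset.mul_prod_erase S _ hiS]
            congr 1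
            apply Finset.prod_congr rfl
            intro k hk
            apply hq_local
            intro j hj
            have hji : j ≠ i := by
              rintro rfl
              rcases Finset.mem_insert.mp hj with h | h
              · exact (Finset.mem_erase.mp hk).1 h.symm
              · exact hnotpa k (Finset.mem_of_mem_erase hk) h
            exact Function.update_of_ne hji _ _
          by_cases hc : ∀ j ∉ S, y j = v j
          · have : ∀ xi : X i,
                (if ∀ j ∉ S, Function.update y i xi j = v j
                  then ∏ k ∈ S, q k (Function.update y i xi) else 0) =
                q i (Function.update y i xi) * ∏ k ∈ S.erase i, q k y := by
              intro xi
              rw [if_pos ((hcond xi).mpr hc), hprod xi]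
            rw [Finset.sum_congr rfl fun xi _ => this xi, ← Finset.sum_mul, hq_norm i y, one_mul]
            rw [if_pos]
            intro j hj
            by_cases hji : j = i
            · exact hji ▸ hyi
            · exact hc j (fun hjS => hj (Finset.mem_erase.mpr ⟨hji, hjS⟩))
          · have : ∀ xi : X i,
                (if ∀ j ∉ S, Function.update y i xi j = v j
                  then ∏ k ∈ S, q k (Function.update y i xi) else 0) = 0 := by
              intro xi
              rw [if_neg (fun h => hc ((hcond xi).mp h))]
            rw [Finset.sum_congr rfl fun xi _ => this xi, Finset.sum_const, smul_zero]
            rw [if_neg]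
            intro h
            exact hc (fun j hj => h j (fun hje => hj (Finset.mem_of_mem_erase hje)))
        · rw [if_neg hyi, if_neg]
          intro h
          exact hyi (h i (Finset.notMem_erase i S))
      rw [Finset.sum_congr rfl fun y _ => hmain y]
      exact IH (S.erase i) (Finset.erase_ssubset hiS) v



open Finset in
/-- Conditioning on `M` in the marginal-replacement distribution `p` coincides
with intervening on `M` in `q`: with `p(v) = ∏_{i∈M} q(vᵢ) ∏_{i∉M} qᵢ(vᵢ|v_{pa i})`,
we have `p(v_{∖M} | v_M) = ∏_{i∉M} qᵢ(vᵢ | v_{pa i})` (positive densities). -/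
theorem conditioning_equals_intervening
    {ι : Type*} [Fintype ι] [DecidableEq ι]
    (X : ι → Type*) [∀ i, Fintype (X i)] [∀ i, DecidableEq (X i)]
    (pa : ι → Finset ι) (hpa : ∀ i, i ∉ pa i)
    (ord : ι → ℕ) (hord : ∀ i, ∀ j ∈ pa i, ord j < ord i)  -- acyclicity
    (q : ∀ _ : ι, (∀ j, X j) → ℝ)
    (hq_pos : ∀ i x, 0 < q i x)
    (hq_local : ∀ i, ∀ x y : ∀ j, X j,
      (∀ j ∈ insert i (pa i), x j = y j) → q i x = q i y)
    (hq_norm : ∀ i, ∀ x : ∀ j, X j, ∑ xi : X i, q i (Function.update x i xi) = 1)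
    (Qd : (∀ j, X j) → ℝ) (hQd : ∀ x, Qd x = ∏ i, q i x)
    (margQ : ∀ i : ι, X i → ℝ)
    (hmarg : ∀ i xi, margQ i xi = ∑ x : ∀ j, X j, if x i = xi then Qd x else 0)
    (M : Finset ι)
    (p : (∀ j, X j) → ℝ)
    (hp : ∀ x, p x = (∏ i ∈ M, margQ i (x i)) * ∏ i ∈ Mᶜ, q i x) :
    ∀ v : ∀ j, X j,
      (0 < ∑ y : ∀ j, X j, if ∀ i ∈ M, y i = v i then p y else 0) ∧
      p v / (∑ y : ∀ j, X j, if ∀ i ∈ M, y i = v i then p y else 0) =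
        ∏ i ∈ Mᶜ, q i v := by
  intro v
  have step : ∀ y : ∀ j, X j, (if ∀ i ∈ M, y i = v i then p y else 0) =
      (∏ i ∈ M, margQ i (v i)) * (if ∀ j ∉ Mᶜ, y j = v j then ∏ i ∈ Mᶜ, q i y else 0) := by
    intro y
    by_cases hc : ∀ i ∈ M, y i = v i
    · rw [if_pos hc, if_pos (fun j hj => hc j (by simpa using hj)), hp y]
      congr 1
      exact Finset.prod_congr rfl fun i hi => by rw [hc i hi]
    · rw [if_neg hc, if_neg (fun h => hc fun i hi => h i (by simp [hi])), mul_zero]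
  have hDval : (∑ y : ∀ j, X j, if ∀ i ∈ M, y i = v i then p y else 0) =
      ∏ i ∈ M, margQ i (v i) := by
    rw [Finset.sum_congr rfl fun y _ => step y, ← Finset.mul_sum,
      sum_truncated_eq_one pa hpa ord hord q hq_local hq_norm Mᶜ v, mul_one]
  have hmpos : 0 < ∏ i ∈ M, margQ i (v i) := by
    apply Finset.prod_pos
    intro i _
    rw [hmarg]
    apply Finset.sum_pos'
    · intro x _
      split
      · rw [hQd]; exact le_of_lt (Finset.prod_pos fun k _ => hq_pos k x)
      · exact le_refl 0
    · exact ⟨v, Finset.mem_univ v, by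
        rw [if_pos rfl, hQd]; exact Finset.prod_pos fun k _ => hq_pos k v⟩
  refine ⟨hDval ▸ hmpos, ?_⟩
  rw [hDval, hp v, mul_div_cancel_left₀ _ (ne_of_gt hmpos)]
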